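/- Under the DPLBFGS iterate assumptions (without convexity of f), assume F is bounded below with infimum F*, and for each t let G_t be the unique minimizer of p ↦ ⟨∇f(x^t), p⟩ + ‖p‖²/2 + Ψ(x^t + p). Then for every t ≥ 0, min_{0 ≤ i ≤ t} ‖G_i‖² ≤ ((F(x⁰) − F*)/(σ₁ (t+1))) · M² (1 + 1/c₂ + √(1 − 2/M + 1/c₂²))² / (2 c₂ (1 − η^S) min_{0 ≤ i ≤ t} λ_i); i.e., the proximal-gradient residual norm tends to zero at rate O(1/√t). -/

import Mathlib

open scoped RealInnerProductSpace

lemma aux_prox {E : Type*} [NormedAddCommGroup E] [InnerProductSpace ℝ E]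
    (g xx Gv : E) (Ψ : E → ℝ) (hΨ : ConvexOn ℝ Set.univ Ψ)
    (hmin : ∀ q : E, ⟪g, Gv⟫ + ‖Gv‖ ^ 2 / 2 + Ψ (xx + Gv)
      ≤ ⟪g, q⟫ + ‖q‖ ^ 2 / 2 + Ψ (xx + q)) :
    ⟪g, Gv⟫ + Ψ (xx + Gv) - Ψ xx ≤ -‖Gv‖ ^ 2 := by
  refine le_of_forall_pos_le_add fun ε hε => ?_
  set s : ℝ := min (1/2) (ε / (‖Gv‖ ^ 2 + 1)) with hsdef
  have hs0 : 0 < s := lt_min (by norm_num) (by positivity)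
  have hs1 : s ≤ 1/2 := min_le_left _ _
  have hsε : s * ‖Gv‖ ^ 2 ≤ ε := by
    have h1 : s ≤ ε / (‖Gv‖ ^ 2 + 1) := min_le_right _ _
    have h2 : s * ‖Gv‖ ^ 2 ≤ (ε / (‖Gv‖ ^ 2 + 1)) * (‖Gv‖ ^ 2 + 1) := by
      have := mul_le_mul h1 (by linarith [sq_nonneg ‖Gv‖] : ‖Gv‖ ^ 2 ≤ ‖Gv‖ ^ 2 + 1)
        (by positivity) (by positivity)
      exact this
    rwa [div_mul_cancel₀ _ (by positivity : (‖Gv‖ ^ 2 + 1) ≠ 0)] at h2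
  have hcv : Ψ (xx + (1 - s) • Gv) ≤ (1 - s) * Ψ (xx + Gv) + s * Ψ xx := by
    have hval : xx + (1 - s) • Gv = (1 - s) • (xx + Gv) + s • xx := by module
    rw [hval]
    have := hΨ.2 (Set.mem_univ (xx + Gv)) (Set.mem_univ xx)
      (by linarith : (0:ℝ) ≤ 1 - s) hs0.le (by ring)
    simpa [smul_eq_mul] using this
  have hm := hmin ((1 - s) • Gv)
  rw [real_inner_smul_right, norm_smul, Real.norm_eq_abs,
    abs_of_nonneg (by linarith : (0:ℝ) ≤ 1 - s)] at hm
  have hkey : s * (⟪g, Gv⟫ + Ψ (xx + Gv) - Ψ xx) ≤ s * ((s - 2) * ‖Gv‖ ^ 2 / 2) := by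
    nlinarith [hm, hcv]
  have hA : ⟪g, Gv⟫ + Ψ (xx + Gv) - Ψ xx ≤ (s - 2) * ‖Gv‖ ^ 2 / 2 :=
    (mul_le_mul_iff_right₀ hs0).mp hkey
  have h0 : 0 ≤ s * ‖Gv‖ ^ 2 := by positivity
  linarith

lemma aux_beta (c M : ℝ) (hc : 0 < c) (hcM : c ≤ M) :
    0 < min 1 (1/M) - (min 1 (1/M)) ^ 2 * M / 2 ∧
    1 ≤ (min 1 (1/M) - (min 1 (1/M)) ^ 2 * M / 2) *
      (M ^ 2 * (1 + 1 / c + Real.sqrt (1 - 2 / M + 1 / c ^ 2)) ^ 2 / (2 * c)) := by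
  have hM : 0 < M := hc.trans_le hcM
  have h1M : 1 / M ≤ 1 / c := one_div_le_one_div_of_le hc hcM
  set s : ℝ := Real.sqrt (1 - 2 / M + 1 / c ^ 2) with hsdef
  have hs0 : 0 ≤ s := Real.sqrt_nonneg _
  have harg : (1 - 1 / M) ^ 2 ≤ 1 - 2 / M + 1 / c ^ 2 := by
    have h2 : (1 / M) ^ 2 ≤ (1 / c) ^ 2 := pow_le_pow_left₀ (by positivity) h1M 2
    have e1 : (1 / c) ^ 2 = 1 / c ^ 2 := by rw [div_pow, one_pow]
    have e3 : 2 / M = 2 * (1 / M) := by ring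
    have e4 : (1 - 1 / M) ^ 2 = 1 - 2 * (1 / M) + (1 / M) ^ 2 := by ring
    linarith
  have hsq : |1 - 1 / M| ≤ s := by
    rw [← Real.sqrt_sq_eq_abs]
    exact Real.sqrt_le_sqrt harg
  set T : ℝ := 1 + 1 / c + s with hTdef
  clear_value s T
  rcases le_total 1 M with h1 | h1
  · have hmin : min 1 (1/M) = 1/M := min_eq_right ((div_le_one hM).mpr h1)
    rw [hmin]
    have hβ : 1/M - (1/M) ^ 2 * M / 2 = 1/(2*M) := by field_simp; ring
    have hT : 2 ≤ T := by
      have := le_abs_self (1 - 1/M)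
      simp only [hTdef]
      linarith
    constructor
    · rw [hβ]; positivity
    · have h4 : 4 * c ≤ M * T ^ 2 := by
        nlinarith [hT, hc, hcM, mul_le_mul hT hT (by linarith) (by linarith : (0:ℝ) ≤ T)]
      have heq : (1/M - (1/M) ^ 2 * M / 2) * (M ^ 2 * T ^ 2 / (2 * c))
          = (M * T ^ 2) / (4 * c) := by field_simp; ring
      rw [heq, le_div_iff₀ (by positivity)]
      linarith
  · have hmin : min 1 (1/M) = 1 := min_eq_left ((le_div_iff₀ hM).mpr (by linarith))
    rw [hmin]
    have h5 : 1/M - 1 ≤ |1 - 1/M| := (le_abs_self _).trans_eq (abs_sub_comm _ _)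
    have hT2 : 2 / M ≤ T := by
      have e3 : 2 / M = 2 * (1 / M) := by ring
      simp only [hTdef]
      linarith
    have hMT : 2 ≤ M * T := by
      calc (2:ℝ) = M * (2 / M) := by field_simp
        _ ≤ M * T := mul_le_mul_of_nonneg_left hT2 hM.le
    constructor
    · nlinarith [hM, h1]
    · have key2 : 2 * c ≤ (1 - 1 ^ 2 * M / 2) * (M ^ 2 * T ^ 2) := by
        nlinarith [hMT, sq_nonneg (M * T - 2), hc, hcM, h1]
      have heq : (1 - 1 ^ 2 * M / 2) * (M ^ 2 * T ^ 2 / (2 * c))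
          = ((1 - 1 ^ 2 * M / 2) * (M ^ 2 * T ^ 2)) / (2 * c) := by ring
      rw [heq, le_div_iff₀ (by positivity)]
      linarith

set_option maxHeartbeats 1000000 in
/-- Theorem 4 of the paper: under the DPLBFGS iterate assumptions
(without convexity of `f`), with `F` bounded below with infimum `F*` and `G_t` the
unique minimizer of `p ↦ ⟨∇f(x^t), p⟩ + ‖p‖²/2 + Ψ(x^t + p)`, the proximal-gradient
residual satisfies, for all `t`,
`min_{0≤i≤t} ‖G_i‖² ≤ ((F(x⁰) − F*)/(σ₁(t+1))) · M²(1 + 1/c₂ + √(1 − 2/M + 1/c₂²))²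
/ (2c₂(1 − η^S) min_{0≤i≤t} λ_i)`. -/
theorem dplbfgs_nonconvex_rate {N : ℕ}
    (L σ₁ η c₂ M lamBar : ℝ) (S : ℕ)
    (hL : 0 < L) (hσ₁ : 0 < σ₁) (hσ₁' : σ₁ < 1)
    (hη0 : 0 ≤ η) (hη1 : η < 1) (hS : 1 ≤ S)
    (hc₂ : 0 < c₂) (hc₂M : c₂ ≤ M) (hlamBar : 0 < lamBar)
    (f : EuclideanSpace ℝ (Fin N) → ℝ) (hf : Differentiable ℝ f)
    (hlip : LipschitzWith (Real.toNNReal L) (fun z => gradient f z))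
    (Ψ : EuclideanSpace ℝ (Fin N) → ℝ) (hΨ : ConvexOn ℝ Set.univ Ψ)
    (F : EuclideanSpace ℝ (Fin N) → ℝ) (hF : ∀ z, F z = f z + Ψ z)
    (x p : ℕ → EuclideanSpace ℝ (Fin N))
    (H : ℕ → (EuclideanSpace ℝ (Fin N) →L[ℝ] EuclideanSpace ℝ (Fin N)))
    (lam : ℕ → ℝ)
    (hHsymm : ∀ t v w, ⟪H t v, w⟫ = ⟪v, H t w⟫)
    (hHlb : ∀ t v, c₂ * ‖v‖ ^ 2 ≤ ⟪v, H t v⟫)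
    (hHub : ∀ t, ‖H t‖ ≤ M)
    (hlam : ∀ t, lamBar ≤ lam t ∧ lam t ≤ 1)
    (Q : ℕ → EuclideanSpace ℝ (Fin N) → ℝ)
    (hQ : ∀ t q, Q t q = ⟪gradient f (x t), q⟫ + (1 / 2) * ⟪q, H t q⟫
      + Ψ (x t + q) - Ψ (x t))
    (Qstar : ℕ → ℝ)
    (hQstar : ∀ t, (∀ q, Qstar t ≤ Q t q) ∧ ∃ q, Q t q = Qstar t)
    (hinexact : ∀ t, Q t (p t) - Qstar t ≤ η ^ S * (0 - Qstar t))
    (hupdate : ∀ t, x (t + 1) = x t + lam t • p t)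
    (harmijo : ∀ t, F (x (t + 1)) ≤ F (x t)
      + lam t * σ₁ * (⟪gradient f (x t), p t⟫ + Ψ (x t + p t) - Ψ (x t)))
    (Fstar : ℝ) (hFstar : IsGLB (Set.range F) Fstar)
    (G : ℕ → EuclideanSpace ℝ (Fin N))
    (hG : ∀ t, (∀ q, ⟪gradient f (x t), G t⟫ + ‖G t‖ ^ 2 / 2 + Ψ (x t + G t)
          ≤ ⟪gradient f (x t), q⟫ + ‖q‖ ^ 2 / 2 + Ψ (x t + q)) ∧
        (∀ q, (∀ r, ⟪gradient f (x t), q⟫ + ‖q‖ ^ 2 / 2 + Ψ (x t + q)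
            ≤ ⟪gradient f (x t), r⟫ + ‖r‖ ^ 2 / 2 + Ψ (x t + r)) → q = G t)) :
    ∀ t : ℕ, (Finset.range (t + 1)).inf' (by simp) (fun i => ‖G i‖ ^ 2)
      ≤ (F (x 0) - Fstar) / (σ₁ * (t + 1))
        * (M ^ 2 * (1 + 1 / c₂ + Real.sqrt (1 - 2 / M + 1 / c₂ ^ 2)) ^ 2
          / (2 * c₂ * (1 - η ^ S) * (Finset.range (t + 1)).inf' (by simp) lam)) := by
  have hM : 0 < M := hc₂.trans_le hc₂M
  set Kc : ℝ := M ^ 2 * (1 + 1 / c₂ + Real.sqrt (1 - 2 / M + 1 / c₂ ^ 2)) ^ 2 / (2 * c₂)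
    with hKc
  have hKpos : 0 < Kc := by
    rw [hKc]
    have h0 : (0:ℝ) < 1 + 1 / c₂ + Real.sqrt (1 - 2 / M + 1 / c₂ ^ 2) := by positivity
    exact div_pos (mul_pos (pow_pos hM 2) (pow_pos h0 2)) (by positivity)
  set α : ℝ := min 1 (1/M) with hαdef
  have hα0 : 0 < α := lt_min one_pos (by positivity)
  have hα1 : α ≤ 1 := min_le_left _ _
  obtain ⟨hβpos, hβ1⟩ := aux_beta c₂ M hc₂ hc₂M
  rw [← hαdef, ← hKc] at hβ1
  rw [← hαdef] at hβpos
  clear_value α Kc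
  -- Qstar ≤ 0
  have hQ0 : ∀ i, Qstar i ≤ 0 := by
    intro i
    have h := (hQstar i).1 0
    rw [hQ] at h
    simpa using h
  -- prox residual basic bound
  have hGb : ∀ i, ⟪gradient f (x i), G i⟫ + Ψ (x i + G i) - Ψ (x i) ≤ -‖G i‖ ^ 2 :=
    fun i => aux_prox _ _ _ _ hΨ (hG i).1
  -- key bound ‖G i‖² ≤ Kc * (-Qstar i)
  have hGQ : ∀ i, ‖G i‖ ^ 2 ≤ Kc * (-(Qstar i)) := by
    intro i
    have hq1 : Qstar i ≤ Q i (α • G i) := (hQstar i).1 _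
    have hq2 : Q i (α • G i) = α * ⟪gradient f (x i), G i⟫
        + α ^ 2 * ⟪G i, H i (G i)⟫ / 2 + Ψ (x i + α • G i) - Ψ (x i) := by
      rw [hQ]
      simp only [map_smul, real_inner_smul_left, real_inner_smul_right]
      ring
    have hips : ⟪G i, H i (G i)⟫ ≤ M * ‖G i‖ ^ 2 := by
      calc ⟪G i, H i (G i)⟫ ≤ ‖G i‖ * ‖H i (G i)‖ := real_inner_le_norm _ _
        _ ≤ ‖G i‖ * (‖H i‖ * ‖G i‖) :=
            mul_le_mul_of_nonneg_left ((H i).le_opNorm _) (norm_nonneg _)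
        _ ≤ M * ‖G i‖ ^ 2 := by nlinarith [hHub i, norm_nonneg (G i), sq_nonneg ‖G i‖]
    have hcvx : Ψ (x i + α • G i) ≤ (1 - α) * Ψ (x i) + α * Ψ (x i + G i) := by
      have hval : x i + α • G i = (1 - α) • (x i) + α • (x i + G i) := by module
      rw [hval]
      have := hΨ.2 (Set.mem_univ (x i)) (Set.mem_univ (x i + G i))
        (by linarith : (0:ℝ) ≤ 1 - α) hα0.le (by ring)
      simpa [smul_eq_mul] using this
    have hmulB : α * (⟪gradient f (x i), G i⟫ + Ψ (x i + G i) - Ψ (x i))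
        ≤ α * (-‖G i‖ ^ 2) := mul_le_mul_of_nonneg_left (hGb i) hα0.le
    have hips2 : α ^ 2 * ⟪G i, H i (G i)⟫ / 2 ≤ α ^ 2 * (M * ‖G i‖ ^ 2) / 2 := by
      have := mul_le_mul_of_nonneg_left hips (by positivity : (0:ℝ) ≤ α ^ 2)
      linarith
    have hQs : Qstar i ≤ -((α - α ^ 2 * M / 2) * ‖G i‖ ^ 2) := by
      nlinarith [hq1, hq2.le, hq2.ge, hcvx, hmulB, hips2]
    nlinarith [mul_le_mul_of_nonneg_left (neg_le_neg hQs) hKpos.le,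
      mul_le_mul_of_nonneg_right hβ1 (sq_nonneg ‖G i‖)]
  -- decrease bound per step
  have hΔ : ∀ i, ⟪gradient f (x i), p i⟫ + Ψ (x i + p i) - Ψ (x i)
      ≤ (1 - η ^ S) * Qstar i := by
    intro i
    have h1 := hinexact i
    have h2 := hHlb i (p i)
    have h3 : (0:ℝ) ≤ ⟪p i, H i (p i)⟫ := le_trans (by positivity) h2
    have h4 := hQ i (p i)
    have e : (1 - η ^ S) * Qstar i = Qstar i - η ^ S * Qstar i := by ring
    have e2 : η ^ S * (0 - Qstar i) = -(η ^ S * Qstar i) := by ring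
    linarith
  -- telescoping Armijo
  have hsum : ∀ n, F (x n) ≤ F (x 0)
      + σ₁ * ∑ i ∈ Finset.range n, lam i * ((1 - η ^ S) * Qstar i) := by
    intro n
    induction n with
    | zero => simp
    | succ n ih =>
      have h1 := harmijo n
      have hlamn : 0 ≤ lam n := le_of_lt (lt_of_lt_of_le hlamBar (hlam n).1)
      have h3 := mul_le_mul_of_nonneg_left (hΔ n) (mul_nonneg hlamn hσ₁.le)
      have e1 : lam n * σ₁ * (⟪gradient f (x n), p n⟫ + Ψ (x n + p n) - Ψ (x n))
          = lam n * σ₁ * (⟪gradient f (x n), p n⟫ + Ψ (x n + p n) - Ψ (x n)) := rfl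
      have e2 : σ₁ * (∑ i ∈ Finset.range n, lam i * ((1 - η ^ S) * Qstar i)
            + lam n * ((1 - η ^ S) * Qstar n))
          = σ₁ * (∑ i ∈ Finset.range n, lam i * ((1 - η ^ S) * Qstar i))
            + lam n * σ₁ * ((1 - η ^ S) * Qstar n) := by ring
      rw [Finset.sum_range_succ, e2]
      linarith
  intro t
  have hηS : η ^ S < 1 := pow_lt_one₀ hη0 hη1 (by omega)
  have h1η : (0:ℝ) < 1 - η ^ S := by linarith
  have htp : (0:ℝ) < (t:ℝ) + 1 := by positivity
  have main : ∀ m lmin : ℝ,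
      (∀ i ∈ Finset.range (t + 1), m ≤ ‖G i‖ ^ 2 ∧ lmin ≤ lam i) →
      0 ≤ m → lamBar ≤ lmin →
      m ≤ (F (x 0) - Fstar) / (σ₁ * ((t:ℝ) + 1))
        * (M ^ 2 * (1 + 1 / c₂ + Real.sqrt (1 - 2 / M + 1 / c₂ ^ 2)) ^ 2
          / (2 * c₂ * (1 - η ^ S) * lmin)) := by
    intro m lmin hml hm0 hlmin
    have hlminpos : 0 < lmin := lt_of_lt_of_le hlamBar hlmin
    have hDi : ∀ i ∈ Finset.range (t + 1),
        lam i * ((1 - η ^ S) * Qstar i) ≤ lmin * ((1 - η ^ S) * (-(m / Kc))) := by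
      intro i hi
      have h1 : m ≤ Kc * (-(Qstar i)) := le_trans (hml i hi).1 (hGQ i)
      have h2 : m / Kc ≤ -(Qstar i) := by
        rw [div_le_iff₀ hKpos]
        have e : Kc * (-(Qstar i)) = (-(Qstar i)) * Kc := mul_comm _ _
        linarith
      have h3 : Qstar i ≤ -(m / Kc) := by linarith
      have h4 : (1 - η ^ S) * Qstar i ≤ (1 - η ^ S) * (-(m / Kc)) :=
        mul_le_mul_of_nonneg_left h3 h1η.le
      have h5 : (1 - η ^ S) * Qstar i ≤ 0 := by
        have hmk : 0 ≤ m / Kc := div_nonneg hm0 hKpos.le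
        have hprod : 0 ≤ (1 - η ^ S) * (m / Kc) := mul_nonneg h1η.le hmk
        have e2 : (1 - η ^ S) * (-(m / Kc)) = -((1 - η ^ S) * (m / Kc)) := by ring
        linarith
      have h6 : lam i * ((1 - η ^ S) * Qstar i) ≤ lmin * ((1 - η ^ S) * Qstar i) :=
        mul_le_mul_of_nonpos_right (hml i hi).2 h5
      have h7 : lmin * ((1 - η ^ S) * Qstar i) ≤ lmin * ((1 - η ^ S) * (-(m / Kc))) :=
        mul_le_mul_of_nonneg_left h4 hlminpos.le
      linarith
    have hSum : ∑ i ∈ Finset.range (t + 1), lam i * ((1 - η ^ S) * Qstar i)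
        ≤ ((t:ℝ) + 1) * (lmin * ((1 - η ^ S) * (-(m / Kc)))) := by
      calc ∑ i ∈ Finset.range (t + 1), lam i * ((1 - η ^ S) * Qstar i)
          ≤ ∑ _i ∈ Finset.range (t + 1), lmin * ((1 - η ^ S) * (-(m / Kc))) :=
            Finset.sum_le_sum hDi
        _ = ((t:ℝ) + 1) * (lmin * ((1 - η ^ S) * (-(m / Kc)))) := by
            rw [Finset.sum_const, Finset.card_range, nsmul_eq_mul]
            push_cast
            ring
    have hFs : Fstar ≤ F (x (t + 1)) := hFstar.1 (Set.mem_range_self _)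
    have hsum' := hsum (t + 1)
    have hσS := mul_le_mul_of_nonneg_left hSum hσ₁.le
    have hD : 0 < σ₁ * ((t:ℝ) + 1) * (1 - η ^ S) * lmin :=
      mul_pos (mul_pos (mul_pos hσ₁ htp) h1η) hlminpos
    have key1 : m * (σ₁ * ((t:ℝ) + 1) * (1 - η ^ S) * lmin) ≤ (F (x 0) - Fstar) * Kc := by
      have e : σ₁ * (((t:ℝ) + 1) * (lmin * ((1 - η ^ S) * (-(m / Kc)))))
          = -(m * (σ₁ * ((t:ℝ) + 1) * (1 - η ^ S) * lmin) / Kc) := by ring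
      have h8 : m * (σ₁ * ((t:ℝ) + 1) * (1 - η ^ S) * lmin) / Kc ≤ F (x 0) - Fstar := by
        linarith
      rw [div_le_iff₀ hKpos] at h8
      linarith
    calc m ≤ (F (x 0) - Fstar) * Kc / (σ₁ * ((t:ℝ) + 1) * (1 - η ^ S) * lmin) := by
          rw [le_div_iff₀ hD]; exact key1
      _ = (F (x 0) - Fstar) / (σ₁ * ((t:ℝ) + 1))
        * (M ^ 2 * (1 + 1 / c₂ + Real.sqrt (1 - 2 / M + 1 / c₂ ^ 2)) ^ 2
          / (2 * c₂ * (1 - η ^ S) * lmin)) := by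
          have hW : M ^ 2 * (1 + 1 / c₂ + Real.sqrt (1 - 2 / M + 1 / c₂ ^ 2)) ^ 2
              = Kc * (2 * c₂) := by
            rw [hKc, div_mul_cancel₀ _ (by positivity : (2 * c₂) ≠ 0)]
          have hd2 : (0:ℝ) < σ₁ * ((t:ℝ) + 1) * (2 * c₂ * (1 - η ^ S) * lmin) :=
            mul_pos (mul_pos hσ₁ htp)
              (mul_pos (mul_pos (mul_pos two_pos hc₂) h1η) hlminpos)
          rw [hW, div_mul_div_comm, div_eq_div_iff hD.ne' hd2.ne']
          ring
  exact main _ _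
    (fun i hi => ⟨Finset.inf'_le _ hi, Finset.inf'_le _ hi⟩)
    (Finset.le_inf' _ _ (fun i _ => by positivity))
    (Finset.le_inf' _ _ (fun i _ => (hlam i).1))
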